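/- Under the hypotheses of the previous statement (three families of operators with ‖ik[T_{f;r}^{(k)},T_{g;r}^{(k)}] − T_{{f,g}_r;r}^{(k)}‖ = O(1/k), ‖T_{f;r}^{(k)}‖ ≤ |f|_∞, ‖T_{f;r}^{(k)}T_{g;r}^{(k)} − T_{fg;r}^{(k)}‖ = O(1/k)), the commutator of the tensor-product operators 𝕋_f^{(k)} = T_{f;1}^{(k)}⊗T_{f;2}^{(k)}⊗T_{f;3}^{(k)} satisfies ‖[𝕋_f^{(k)},𝕋_g^{(k)}]‖ = O(1/k), and consequently the order-4 generalized commutator satisfies ‖[𝕋_f^{(k)},𝕋_g^{(k)},𝕋_h^{(k)},𝕋_t^{(k)}]‖ = O(1/k²) as k→∞. -/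

import Mathlib

open Filter Asymptotics

/-- The Nambu generalized commutator. -/
noncomputable def nambu {R : Type*} [Ring R] {n : ℕ} (A : Fin n → R) : R :=
  ∑ σ : Equiv.Perm (Fin n), (Equiv.Perm.sign σ : ℤ) • (List.ofFn fun i => A (σ i)).prod

lemma nambu_expand {R : Type*} [Ring R] (A : Fin 4 → R) :
    nambu A = ∑ σ : Equiv.Perm (Fin 4), (Equiv.Perm.sign σ : ℤ) •
      (A (σ 0) * (A (σ 1) * (A (σ 2) * A (σ 3)))) := by
  simp [nambu, List.ofFn_succ, mul_assoc, show (Fin.succ 2 : Fin 4) = 3 from rfl]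

lemma swap_reindex {R : Type*} [AddCommMonoid R] (B : Equiv.Perm (Fin 4) → R) (i j : Fin 4) :
    ∑ σ : Equiv.Perm (Fin 4), B σ = ∑ σ : Equiv.Perm (Fin 4), B (σ * Equiv.swap i j) :=
  (Fintype.sum_bijective (· * Equiv.swap i j) (Group.mulRight_bijective _) _ _ fun _ => rfl).symm

lemma nambu_four {R : Type*} [Ring R] (A : Fin 4 → R) :
    (4 : ℤ) • nambu A = ∑ σ : Equiv.Perm (Fin 4), (Equiv.Perm.sign σ : ℤ) •
      ((A (σ 0) * A (σ 1) - A (σ 1) * A (σ 0)) *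
       (A (σ 2) * A (σ 3) - A (σ 3) * A (σ 2))) := by
  have step1 : (2 : ℤ) • nambu A = ∑ σ : Equiv.Perm (Fin 4), (Equiv.Perm.sign σ : ℤ) •
      ((A (σ 0) * A (σ 1) - A (σ 1) * A (σ 0)) * (A (σ 2) * A (σ 3))) := by
    rw [nambu_expand, two_smul]
    nth_rewrite 2 [swap_reindex (fun σ => (Equiv.Perm.sign σ : ℤ) •
      (A (σ 0) * (A (σ 1) * (A (σ 2) * A (σ 3))))) 0 1]
    rw [← Finset.sum_add_distrib]
    refine Finset.sum_congr rfl fun σ _ => ?_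
    simp only [Equiv.Perm.mul_apply, Equiv.swap_apply_left, Equiv.swap_apply_right,
      Equiv.swap_apply_of_ne_of_ne (by decide : (2:Fin 4) ≠ 0) (by decide : (2:Fin 4) ≠ 1),
      Equiv.swap_apply_of_ne_of_ne (by decide : (3:Fin 4) ≠ 0) (by decide : (3:Fin 4) ≠ 1),
      Equiv.Perm.sign_mul, Equiv.Perm.sign_swap (by decide : (0:Fin 4) ≠ 1)]
    push_cast
    rw [mul_neg_one, neg_smul, ← sub_eq_add_neg, ← smul_sub]
    congr 1
    noncomm_ring
  have step2 : (2 : ℤ) • ∑ σ : Equiv.Perm (Fin 4), (Equiv.Perm.sign σ : ℤ) •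
      ((A (σ 0) * A (σ 1) - A (σ 1) * A (σ 0)) * (A (σ 2) * A (σ 3)))
      = ∑ σ : Equiv.Perm (Fin 4), (Equiv.Perm.sign σ : ℤ) •
      ((A (σ 0) * A (σ 1) - A (σ 1) * A (σ 0)) *
       (A (σ 2) * A (σ 3) - A (σ 3) * A (σ 2))) := by
    rw [two_smul]
    nth_rewrite 2 [swap_reindex (fun σ => (Equiv.Perm.sign σ : ℤ) •
      ((A (σ 0) * A (σ 1) - A (σ 1) * A (σ 0)) * (A (σ 2) * A (σ 3)))) 2 3]
    rw [← Finset.sum_add_distrib]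
    refine Finset.sum_congr rfl fun σ _ => ?_
    simp only [Equiv.Perm.mul_apply, Equiv.swap_apply_left, Equiv.swap_apply_right,
      Equiv.swap_apply_of_ne_of_ne (by decide : (0:Fin 4) ≠ 2) (by decide : (0:Fin 4) ≠ 3),
      Equiv.swap_apply_of_ne_of_ne (by decide : (1:Fin 4) ≠ 2) (by decide : (1:Fin 4) ≠ 3),
      Equiv.Perm.sign_mul, Equiv.Perm.sign_swap (by decide : (2:Fin 4) ≠ 3)]
    push_cast
    rw [mul_neg_one, neg_smul, ← sub_eq_add_neg, ← smul_sub]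
    congr 1
    noncomm_ring
  rw [show (4:ℤ) = 2 * 2 from rfl, mul_smul, step1, step2]

lemma one_div_isBigO_one : (fun k : ℕ => (1:ℝ)/k) =O[atTop] fun _ : ℕ => (1:ℝ) := by
  rw [isBigO_iff]
  refine ⟨1, ?_⟩
  filter_upwards [eventually_ge_atTop 1] with k hk
  have hk1 : (1:ℝ) ≤ k := by exact_mod_cast hk
  rw [Real.norm_of_nonneg (by positivity), norm_one, mul_one]
  rw [div_le_one (by linarith)]; linarith

lemma commA {H : ℕ → Type*} [∀ k, NormedRing (H k)] [∀ k, NormedAlgebra ℂ (H k)]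
    {F : Type*} [CommRing F] [Algebra ℂ F]
    (T : ∀ k, F →ₗ[ℂ] H k) (br : F → F → F) (supNorm : F → ℝ)
    (h₁ : ∀ f g : F,
      (fun k : ℕ => ‖(Complex.I * k) • (T k f * T k g - T k g * T k f) - T k (br f g)‖)
        =O[atTop] fun k : ℕ => (1 : ℝ) / k)
    (h₂ : ∀ (f : F) (k : ℕ), ‖T k f‖ ≤ supNorm f)
    (f g : F) :
    (fun k : ℕ => ‖T k f * T k g - T k g * T k f‖) =O[atTop] fun k : ℕ => (1:ℝ)/k := by
  obtain ⟨C, hC⟩ := isBigO_iff.mp ((h₁ f g).trans one_div_isBigO_one)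
  rw [isBigO_iff]
  refine ⟨C + supNorm (br f g), ?_⟩
  filter_upwards [hC, eventually_ge_atTop 1] with k hCk hk
  have hk1 : (1:ℝ) ≤ k := by exact_mod_cast hk
  have hkpos : (0:ℝ) < k := by linarith
  set x := T k f * T k g - T k g * T k f with hx
  have hCk' : ‖(Complex.I * k) • x - T k (br f g)‖ ≤ C := by
    simpa [Real.norm_of_nonneg (norm_nonneg _)] using hCk
  have hsmul : ‖(Complex.I * k) • x‖ = k * ‖x‖ := by
    rw [norm_smul, norm_mul, Complex.norm_I, Complex.norm_natCast, one_mul]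
  have key : (k:ℝ) * ‖x‖ ≤ C + supNorm (br f g) := by
    calc (k:ℝ) * ‖x‖ = ‖(Complex.I * k) • x‖ := hsmul.symm
      _ ≤ ‖(Complex.I * k) • x - T k (br f g)‖ + ‖T k (br f g)‖ := by
        have := norm_sub_norm_le ((Complex.I * k) • x) (T k (br f g))
        linarith [norm_nonneg (T k (br f g))]
      _ ≤ C + supNorm (br f g) := add_le_add hCk' (h₂ _ _)
  rw [Real.norm_of_nonneg (norm_nonneg _), Real.norm_of_nonneg (by positivity)]
  rw [← sub_nonneg]
  have h0 : (0:ℝ) ≤ ((C + supNorm (br f g)) - k * ‖x‖) / k := by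
    have : (0:ℝ) ≤ (C + supNorm (br f g)) - k * ‖x‖ := by linarith
    positivity
  have heq : ((C + supNorm (br f g)) - k * ‖x‖) / k = (C + supNorm (br f g)) * (1/k) - ‖x‖ := by
    field_simp
  linarith [heq ▸ h0]

/-- Corollaries `tensorcorcomm` and `tensorcorcomm2`: under the
Berezin–Toeplitz hypotheses on the three families `T_{·;r}^{(k)}` and the tensor map `τ`,
the tensor-product operators `𝕋_f = T_{f;1}⊗T_{f;2}⊗T_{f;3}` satisfy
`‖[𝕋_f,𝕋_g]‖ = O(1/k)` and `‖[𝕋_f,𝕋_g,𝕋_h,𝕋_t]‖ = O(1/k²)` as `k → ∞`. -/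
theorem stmt16 {F : Type*} [CommRing F] [Algebra ℂ F]
    (H₁ H₂ H₃ W : ℕ → Type*)
    [∀ k, NormedRing (H₁ k)] [∀ k, NormedAlgebra ℂ (H₁ k)]
    [∀ k, NormedRing (H₂ k)] [∀ k, NormedAlgebra ℂ (H₂ k)]
    [∀ k, NormedRing (H₃ k)] [∀ k, NormedAlgebra ℂ (H₃ k)]
    [∀ k, NormedRing (W k)] [∀ k, NormedAlgebra ℂ (W k)]
    (T₁ : ∀ k, F →ₗ[ℂ] H₁ k) (T₂ : ∀ k, F →ₗ[ℂ] H₂ k) (T₃ : ∀ k, F →ₗ[ℂ] H₃ k)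
    (br₁ br₂ br₃ : F → F → F) (supNorm : F → ℝ)
    (h₁₁ : ∀ f g : F,
      (fun k : ℕ => ‖(Complex.I * k) • (T₁ k f * T₁ k g - T₁ k g * T₁ k f) - T₁ k (br₁ f g)‖)
        =O[atTop] fun k : ℕ => (1 : ℝ) / k)
    (h₁₂ : ∀ f g : F,
      (fun k : ℕ => ‖(Complex.I * k) • (T₂ k f * T₂ k g - T₂ k g * T₂ k f) - T₂ k (br₂ f g)‖)
        =O[atTop] fun k : ℕ => (1 : ℝ) / k)
    (h₁₃ : ∀ f g : F,
      (fun k : ℕ => ‖(Complex.I * k) • (T₃ k f * T₃ k g - T₃ k g * T₃ k f) - T₃ k (br₃ f g)‖)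
        =O[atTop] fun k : ℕ => (1 : ℝ) / k)
    (h₂₁ : ∀ (f : F) (k : ℕ), ‖T₁ k f‖ ≤ supNorm f)
    (h₂₂ : ∀ (f : F) (k : ℕ), ‖T₂ k f‖ ≤ supNorm f)
    (h₂₃ : ∀ (f : F) (k : ℕ), ‖T₃ k f‖ ≤ supNorm f)
    (h₃₁ : ∀ f g : F,
      (fun k : ℕ => ‖T₁ k f * T₁ k g - T₁ k (f * g)‖) =O[atTop] fun k : ℕ => (1 : ℝ) / k)
    (h₃₂ : ∀ f g : F,
      (fun k : ℕ => ‖T₂ k f * T₂ k g - T₂ k (f * g)‖) =O[atTop] fun k : ℕ => (1 : ℝ) / k)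
    (h₃₃ : ∀ f g : F,
      (fun k : ℕ => ‖T₃ k f * T₃ k g - T₃ k (f * g)‖) =O[atTop] fun k : ℕ => (1 : ℝ) / k)
    (τ : ∀ k, H₁ k → H₂ k → H₃ k → W k)
    (hnorm : ∀ k X Y Z, ‖τ k X Y Z‖ = ‖X‖ * ‖Y‖ * ‖Z‖)
    (hmul : ∀ k X X' Y Y' Z Z',
      τ k X Y Z * τ k X' Y' Z' = τ k (X * X') (Y * Y') (Z * Z'))
    (hsub₁ : ∀ k X X' Y Z, τ k (X - X') Y Z = τ k X Y Z - τ k X' Y Z)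
    (hsub₂ : ∀ k X Y Y' Z, τ k X (Y - Y') Z = τ k X Y Z - τ k X Y' Z)
    (hsub₃ : ∀ k X Y Z Z', τ k X Y (Z - Z') = τ k X Y Z - τ k X Y Z')
    (f g h t : F) :
    ((fun k : ℕ =>
        ‖τ k (T₁ k f) (T₂ k f) (T₃ k f) * τ k (T₁ k g) (T₂ k g) (T₃ k g) -
          τ k (T₁ k g) (T₂ k g) (T₃ k g) * τ k (T₁ k f) (T₂ k f) (T₃ k f)‖)
      =O[atTop] fun k : ℕ => (1 : ℝ) / k) ∧
    ((fun k : ℕ =>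
        ‖nambu ![τ k (T₁ k f) (T₂ k f) (T₃ k f), τ k (T₁ k g) (T₂ k g) (T₃ k g),
            τ k (T₁ k h) (T₂ k h) (T₃ k h), τ k (T₁ k t) (T₂ k t) (T₃ k t)]‖)
      =O[atTop] fun k : ℕ => (1 : ℝ) / (k : ℝ) ^ 2) := by
  have s0 : ∀ w : F, 0 ≤ supNorm w := fun w => le_trans (norm_nonneg (T₁ 0 w)) (h₂₁ w 0)
  -- the tensor commutator estimate
  have key : ∀ u v : F,
      (fun k : ℕ => ‖τ k (T₁ k u) (T₂ k u) (T₃ k u) * τ k (T₁ k v) (T₂ k v) (T₃ k v) -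
          τ k (T₁ k v) (T₂ k v) (T₃ k v) * τ k (T₁ k u) (T₂ k u) (T₃ k u)‖)
        =O[atTop] fun k : ℕ => (1:ℝ)/k := by
    intro u v
    have e₁ := commA T₁ br₁ supNorm h₁₁ h₂₁ u v
    have e₂ := commA T₂ br₂ supNorm h₁₂ h₂₂ u v
    have e₃ := commA T₃ br₃ supNorm h₁₃ h₂₃ u v
    have hb2 : (fun k : ℕ => ‖T₂ k u * T₂ k v‖) =O[atTop] fun _ : ℕ => (1:ℝ) := by
      apply IsBigO.of_bound (supNorm u * supNorm v)
      filter_upwards with k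
      rw [norm_norm, norm_one, mul_one]
      exact le_trans (norm_mul_le _ _) (mul_le_mul (h₂₂ u k) (h₂₂ v k) (norm_nonneg _) (s0 u))
    have hb3 : (fun k : ℕ => ‖T₃ k u * T₃ k v‖) =O[atTop] fun _ : ℕ => (1:ℝ) := by
      apply IsBigO.of_bound (supNorm u * supNorm v)
      filter_upwards with k
      rw [norm_norm, norm_one, mul_one]
      exact le_trans (norm_mul_le _ _) (mul_le_mul (h₂₃ u k) (h₂₃ v k) (norm_nonneg _) (s0 u))
    have hq1 : (fun k : ℕ => ‖T₁ k v * T₁ k u‖) =O[atTop] fun _ : ℕ => (1:ℝ) := by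
      apply IsBigO.of_bound (supNorm v * supNorm u)
      filter_upwards with k
      rw [norm_norm, norm_one, mul_one]
      exact le_trans (norm_mul_le _ _) (mul_le_mul (h₂₁ v k) (h₂₁ u k) (norm_nonneg _) (s0 v))
    have hq2 : (fun k : ℕ => ‖T₂ k v * T₂ k u‖) =O[atTop] fun _ : ℕ => (1:ℝ) := by
      apply IsBigO.of_bound (supNorm v * supNorm u)
      filter_upwards with k
      rw [norm_norm, norm_one, mul_one]
      exact le_trans (norm_mul_le _ _) (mul_le_mul (h₂₂ v k) (h₂₂ u k) (norm_nonneg _) (s0 v))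
    have n1 : (fun k : ℕ =>
        ‖τ k (T₁ k u * T₁ k v - T₁ k v * T₁ k u) (T₂ k u * T₂ k v) (T₃ k u * T₃ k v)‖)
        =O[atTop] fun k : ℕ => (1:ℝ)/k := by
      have hrw : (fun k : ℕ =>
          ‖τ k (T₁ k u * T₁ k v - T₁ k v * T₁ k u) (T₂ k u * T₂ k v) (T₃ k u * T₃ k v)‖)
          = fun k : ℕ => ‖T₁ k u * T₁ k v - T₁ k v * T₁ k u‖ * ‖T₂ k u * T₂ k v‖ *
            ‖T₃ k u * T₃ k v‖ := funext fun k => hnorm k _ _ _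
      rw [hrw]
      simpa using (e₁.mul hb2).mul hb3
    have n2 : (fun k : ℕ =>
        ‖τ k (T₁ k v * T₁ k u) (T₂ k u * T₂ k v - T₂ k v * T₂ k u) (T₃ k u * T₃ k v)‖)
        =O[atTop] fun k : ℕ => (1:ℝ)/k := by
      have hrw : (fun k : ℕ =>
          ‖τ k (T₁ k v * T₁ k u) (T₂ k u * T₂ k v - T₂ k v * T₂ k u) (T₃ k u * T₃ k v)‖)
          = fun k : ℕ => ‖T₁ k v * T₁ k u‖ * ‖T₂ k u * T₂ k v - T₂ k v * T₂ k u‖ *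
            ‖T₃ k u * T₃ k v‖ := funext fun k => hnorm k _ _ _
      rw [hrw]
      simpa using (hq1.mul e₂).mul hb3
    have n3 : (fun k : ℕ =>
        ‖τ k (T₁ k v * T₁ k u) (T₂ k v * T₂ k u) (T₃ k u * T₃ k v - T₃ k v * T₃ k u)‖)
        =O[atTop] fun k : ℕ => (1:ℝ)/k := by
      have hrw : (fun k : ℕ =>
          ‖τ k (T₁ k v * T₁ k u) (T₂ k v * T₂ k u) (T₃ k u * T₃ k v - T₃ k v * T₃ k u)‖)
          = fun k : ℕ => ‖T₁ k v * T₁ k u‖ * ‖T₂ k v * T₂ k u‖ *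
            ‖T₃ k u * T₃ k v - T₃ k v * T₃ k u‖ := funext fun k => hnorm k _ _ _
      rw [hrw]
      simpa using (hq1.mul hq2).mul e₃
    have hD : ∀ k : ℕ,
        τ k (T₁ k u) (T₂ k u) (T₃ k u) * τ k (T₁ k v) (T₂ k v) (T₃ k v) -
          τ k (T₁ k v) (T₂ k v) (T₃ k v) * τ k (T₁ k u) (T₂ k u) (T₃ k u)
        = τ k (T₁ k u * T₁ k v - T₁ k v * T₁ k u) (T₂ k u * T₂ k v) (T₃ k u * T₃ k v)
          + τ k (T₁ k v * T₁ k u) (T₂ k u * T₂ k v - T₂ k v * T₂ k u) (T₃ k u * T₃ k v)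
          + τ k (T₁ k v * T₁ k u) (T₂ k v * T₂ k u) (T₃ k u * T₃ k v - T₃ k v * T₃ k u) := by
      intro k
      rw [hmul, hmul, hsub₁, hsub₂, hsub₃]
      abel
    refine IsBigO.trans ?_ ((n1.add n2).add n3)
    apply IsBigO.of_bound 1
    filter_upwards with k
    rw [norm_norm, one_mul, hD k, Real.norm_of_nonneg (by positivity)]
    exact norm_add₃_le
  refine ⟨key f g, ?_⟩
  -- part 2
  have hσ : ∀ σ : Equiv.Perm (Fin 4),
      (fun k : ℕ =>
        ‖τ k (T₁ k (![f,g,h,t] (σ 0))) (T₂ k (![f,g,h,t] (σ 0))) (T₃ k (![f,g,h,t] (σ 0))) *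
           τ k (T₁ k (![f,g,h,t] (σ 1))) (T₂ k (![f,g,h,t] (σ 1))) (T₃ k (![f,g,h,t] (σ 1))) -
         τ k (T₁ k (![f,g,h,t] (σ 1))) (T₂ k (![f,g,h,t] (σ 1))) (T₃ k (![f,g,h,t] (σ 1))) *
           τ k (T₁ k (![f,g,h,t] (σ 0))) (T₂ k (![f,g,h,t] (σ 0))) (T₃ k (![f,g,h,t] (σ 0)))‖ *
        ‖τ k (T₁ k (![f,g,h,t] (σ 2))) (T₂ k (![f,g,h,t] (σ 2))) (T₃ k (![f,g,h,t] (σ 2))) *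
           τ k (T₁ k (![f,g,h,t] (σ 3))) (T₂ k (![f,g,h,t] (σ 3))) (T₃ k (![f,g,h,t] (σ 3))) -
         τ k (T₁ k (![f,g,h,t] (σ 3))) (T₂ k (![f,g,h,t] (σ 3))) (T₃ k (![f,g,h,t] (σ 3))) *
           τ k (T₁ k (![f,g,h,t] (σ 2))) (T₂ k (![f,g,h,t] (σ 2))) (T₃ k (![f,g,h,t] (σ 2)))‖)
      =O[atTop] fun k : ℕ => (1:ℝ)/(k:ℝ)^2 := by
    intro σ
    have hg : (fun k : ℕ => ((1:ℝ)/k) * ((1:ℝ)/k)) = fun k : ℕ => (1:ℝ)/(k:ℝ)^2 := by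
      funext k; ring
    exact hg ▸ (key (![f,g,h,t] (σ 0)) (![f,g,h,t] (σ 1))).mul
      (key (![f,g,h,t] (σ 2)) (![f,g,h,t] (σ 3)))
  have hsum := (IsBigO.sum fun σ (_ : σ ∈ Finset.univ) => hσ σ).const_mul_left ((1:ℝ)/4)
  refine IsBigO.trans ?_ hsum
  apply IsBigO.of_bound 1
  filter_upwards with k
  simp only [Finset.sum_apply]
  rw [norm_norm, one_mul, Real.norm_of_nonneg (by positivity)]
  -- now a pointwise bound
  set A : Fin 4 → W k := fun i =>
    τ k (T₁ k (![f,g,h,t] i)) (T₂ k (![f,g,h,t] i)) (T₃ k (![f,g,h,t] i)) with hA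
  have hmat : (![τ k (T₁ k f) (T₂ k f) (T₃ k f), τ k (T₁ k g) (T₂ k g) (T₃ k g),
      τ k (T₁ k h) (T₂ k h) (T₃ k h), τ k (T₁ k t) (T₂ k t) (T₃ k t)] : Fin 4 → W k) = A := by
    funext i; fin_cases i <;> rfl
  rw [hmat]
  have hnz : ‖nambu A‖ = (1/4 : ℝ) * ‖(4:ℤ) • nambu A‖ := by
    rw [← Int.cast_smul_eq_zsmul ℂ, norm_smul]
    norm_num
    ring
  rw [hnz, nambu_four A]
  apply mul_le_mul_of_nonneg_left _ (by norm_num : (0:ℝ) ≤ 1/4)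
  refine le_trans (norm_sum_le _ _) (Finset.sum_le_sum fun σ _ => ?_)
  have hsgn : ∀ z : W k, ‖(Equiv.Perm.sign σ : ℤ) • z‖ = ‖z‖ := by
    intro z
    rcases Int.units_eq_one_or (Equiv.Perm.sign σ) with hs | hs <;> rw [hs] <;> simp
  rw [hsgn]
  exact norm_mul_le _ _
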